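/- Gautschi's inequality: for any real x > 0 and any s ∈ (0,1), x^{1-s} < Γ(x+1)/Γ(x+s) < (x+1)^{1-s}. -/

import Mathlib

/-- Gautschi's inequality: for `x > 0` and `s ∈ (0,1)`,
`x^(1-s) < Γ(x+1)/Γ(x+s) < (x+1)^(1-s)`. -/
theorem gautschi_inequality {x s : ℝ} (hx : 0 < x) (hs : s ∈ Set.Ioo (0 : ℝ) 1) :
    x ^ (1 - s) < Real.Gamma (x + 1) / Real.Gamma (x + s) ∧
      Real.Gamma (x + 1) / Real.Gamma (x + s) < (x + 1) ^ (1 - s) := by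
  obtain ⟨hs0, hs1⟩ := hs
  have hΓ : ∀ y : ℝ, 0 < y → 0 < Real.Gamma y := fun y hy => Real.Gamma_pos_of_pos hy
  set f : ℝ → ℝ := fun y => Real.log (Real.Gamma y) with hfdef
  have hfe : ∀ y : ℝ, 0 < y → f (y + 1) = Real.log y + f y := by
    intro y hy
    simp only [hfdef]
    rw [Real.Gamma_add_one hy.ne', Real.log_mul hy.ne' (hΓ y hy).ne']
  have key : ∀ a b u v : ℝ, 0 < u → 0 < v → 0 ≤ a → 0 ≤ b → a + b = 1 →
      f (a * u + b * v) ≤ a * f u + b * f v := by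
    intro a b u v hu hv ha hb hab
    have := Real.convexOn_log_Gamma.2 (Set.mem_Ioi.mpr hu) (Set.mem_Ioi.mpr hv) ha hb hab
    simpa [hfdef] using this
  have hfx1 : f (x + 1) = Real.log x + f x := hfe x hx
  have hxs : (0:ℝ) < x + s := by linarith
  -- upper bound in log form
  have hup : f (x + 1) - f (x + s) < (1 - s) * Real.log (x + 1) := by
    have h1 : f (x + 1) ≤ s * f (x + s) + (1 - s) * f (x + s + 1) := by
      have := key s (1 - s) (x + s) (x + s + 1) hxs (by linarith) hs0.le (by linarith)
        (by ring)
      have hpt : s * (x + s) + (1 - s) * (x + s + 1) = x + 1 := by ring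
      rwa [hpt] at this
    have h2 : f (x + s + 1) = Real.log (x + s) + f (x + s) := hfe (x + s) hxs
    have h3 : Real.log (x + s) < Real.log (x + 1) :=
      Real.log_lt_log hxs (by linarith)
    nlinarith
  -- lower bound in log form
  have hlo : (1 - s) * Real.log x < f (x + 1) - f (x + s) := by
    by_contra hcon
    push_neg at hcon
    have h1 : f (x + s) ≤ (1 - s) * f x + s * f (x + 1) := by
      have := key (1 - s) s x (x + 1) hx (by linarith) (by linarith) hs0.le (by ring)
      have hpt : (1 - s) * x + s * (x + 1) = x + s := by ring
      rwa [hpt] at this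
    have heq : f (x + s) = f x + s * Real.log x := by nlinarith
    set m : ℝ := (s + 1) / 2 with hmdef
    have hms : s < m := by rw [hmdef]; linarith
    have hm1 : m < 1 := by rw [hmdef]; linarith
    have hm0 : 0 < m := lt_trans hs0 hms
    have hBm : f (x + m) ≤ f x + m * Real.log x := by
      have := key (1 - m) m x (x + 1) hx (by linarith) (by linarith) hm0.le (by ring)
      have hpt : (1 - m) * x + m * (x + 1) = x + m := by ring
      rw [hpt] at this
      nlinarith
    have hBl : f (x + s) ≤ (1 - s / m) * f x + (s / m) * f (x + m) := by
      have hsm : 0 ≤ s / m := by positivity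
      have := key (1 - s / m) (s / m) x (x + m) hx (by linarith) (by
        have : s / m < 1 := (div_lt_one hm0).mpr hms
        linarith) hsm (by ring)
      have hpt : (1 - s / m) * x + (s / m) * (x + m) = x + s := by
        field_simp
        ring
      rwa [hpt] at this
    have hmeq : f (x + m) = f x + m * Real.log x := by
      have h2 : s * Real.log x ≤ s / m * (f (x + m) - f x) := by
        have hexp : (1 - s / m) * f x + s / m * f (x + m)
            = f x + s / m * (f (x + m) - f x) := by ring
        rw [hexp] at hBl
        linarith [heq ▸ hBl]
      have h3 : f (x + m) - f x ≥ m * Real.log x := by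
        have hmul := mul_le_mul_of_nonneg_left h2
          (le_of_lt (by positivity : (0:ℝ) < m / s))
        have hms' : m / s * (s / m * (f (x + m) - f x)) = f (x + m) - f x := by
          field_simp
        have hms'' : m / s * (s * Real.log x) = m * Real.log x := by
          field_simp
        linarith [hmul, hms'.symm ▸ hmul]
      linarith [hBm, h3]
    -- Step C: convexity at x+1+s, x+2 with midpoint x+1+m
    have hC : f (x + 1 + m) ≤ (1/2) * f (x + 1 + s) + (1/2) * f (x + 2) := by
      have := key (1/2) (1/2) (x + 1 + s) (x + 2) (by linarith) (by linarith)
        (by norm_num) (by norm_num) (by norm_num)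
      have hpt : (1/2) * (x + 1 + s) + (1/2) * (x + 2) = x + 1 + m := by
        rw [hmdef]; ring
      rwa [hpt] at this
    have e1 : f (x + 1 + s) = Real.log (x + s) + f (x + s) := by
      have := hfe (x + s) hxs
      have hpt : x + s + 1 = x + 1 + s := by ring
      rwa [hpt] at this
    have e2 : f (x + 1 + m) = Real.log (x + m) + f (x + m) := by
      have := hfe (x + m) (by linarith)
      have hpt : x + m + 1 = x + 1 + m := by ring
      rwa [hpt] at this
    have e3 : f (x + 2) = Real.log (x + 1) + f (x + 1) := by
      have := hfe (x + 1) (by linarith)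
      have hpt : x + 1 + 1 = x + 2 := by ring
      rwa [hpt] at this
    -- deduce log(x+m) ≤ ½ log(x+s) + ½ log(x+1)
    have hlogle : Real.log (x + m) ≤ (1/2) * Real.log (x + s) + (1/2) * Real.log (x + 1) := by
      have hmval : m * Real.log x = (1/2) * (s * Real.log x) + (1/2) * Real.log x := by
        rw [hmdef]; ring
      nlinarith [hC, e1, e2, e3, heq, hmeq, hfx1]
    -- strict concavity of log contradicts this
    have hstrict : (1/2 : ℝ) * Real.log (x + s) + (1/2) * Real.log (x + 1)
        < Real.log (x + m) := by
      have := strictConcaveOn_log_Ioi.2 (Set.mem_Ioi.mpr hxs)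
        (Set.mem_Ioi.mpr (by linarith : (0:ℝ) < x + 1))
        (by intro h; apply absurd h; intro h'; linarith [h'] : x + s ≠ x + 1)
        (by norm_num : (0:ℝ) < 1/2) (by norm_num : (0:ℝ) < 1/2) (by norm_num)
      have hpt : (1/2 : ℝ) • (x + s) + (1/2 : ℝ) • (x + 1) = x + m := by
        simp only [smul_eq_mul]; rw [hmdef]; ring
      rw [hpt] at this
      simpa using this
    linarith
  -- convert log inequalities to the statement
  have hratio : Real.Gamma (x + 1) / Real.Gamma (x + s)
      = Real.exp (f (x + 1) - f (x + s)) := by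
    rw [Real.exp_sub, hfdef]
    simp only
    rw [Real.exp_log (hΓ _ (by linarith)), Real.exp_log (hΓ _ hxs)]
  constructor
  · rw [hratio, ← Real.exp_log (Real.rpow_pos_of_pos hx (1 - s)),
      Real.log_rpow hx]
    exact Real.exp_lt_exp.mpr hlo
  · rw [hratio, ← Real.exp_log (Real.rpow_pos_of_pos (by linarith : (0:ℝ) < x + 1) (1 - s)),
      Real.log_rpow (by linarith)]
    exact Real.exp_lt_exp.mpr hup
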